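/- arXiv:1311.6050 — 3 statements merged into one kernel-verified Lean document; each statement's English description precedes it below -/
import Mathlib

section
/- Suppose μA, μB, μAB ∈ [0,1] satisfy μAB ≤ min(μA, μB) and 1 − μA − μB + μAB ≥ 0. Then there exists a probability measure P on a finite sample space and events E_A, E_B such that P(E_A)=μA, P(E_B)=μB, and P(E_A ∩ E_B)=μAB. -/
open MeasureTheory

theorem stmt_1 (μA μB μAB : ℝ) (hμA : 0 ≤ μA ∧ μA ≤ 1) (hμB : 0 ≤ μB ∧ μB ≤ 1)
    (hμAB : 0 ≤ μAB ∧ μAB ≤ 1)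
    (h1 : μAB ≤ min μA μB) (h2 : 0 ≤ 1 - μA - μB + μAB) :
    ∃ (Ω : Type) (_ : MeasurableSpace Ω) (_ : Finite Ω) (P : Measure Ω)
      (_ : IsProbabilityMeasure P) (EA EB : Set Ω),
      (P EA).toReal = μA ∧ (P EB).toReal = μB ∧ (P (EA ∩ EB)).toReal = μAB := by
  have hA := le_trans h1 (min_le_left _ _)
  have hB := le_trans h1 (min_le_right _ _)
  have hAB0 := hμAB.1
  refine ⟨Bool × Bool, inferInstance, inferInstance,
    ENNReal.ofReal μAB • Measure.dirac (true, true)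
      + ENNReal.ofReal (μA - μAB) • Measure.dirac (true, false)
      + ENNReal.ofReal (μB - μAB) • Measure.dirac (false, true)
      + ENNReal.ofReal (1 - μA - μB + μAB) • Measure.dirac (false, false),
    ?_, {x | x.1 = true}, {x | x.2 = true}, ?_, ?_, ?_⟩
  · constructor
    simp only [Measure.add_apply, Measure.smul_apply, smul_eq_mul,
      Measure.dirac_apply' _ MeasurableSet.univ, Set.indicator_univ, Pi.one_apply, mul_one]
    rw [← ENNReal.ofReal_add hAB0 (by linarith), ← ENNReal.ofReal_add (by linarith) (by linarith),
      ← ENNReal.ofReal_add (by linarith) h2]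
    norm_num
    ring
  · simp only [Measure.add_apply, Measure.smul_apply, smul_eq_mul,
      Measure.dirac_apply' _ (Set.toFinite _).measurableSet, Set.indicator_apply,
      Set.mem_setOf_eq, Pi.one_apply]
    norm_num
    rw [← ENNReal.ofReal_add hAB0 (by linarith), ENNReal.toReal_ofReal (by linarith)]
    ring
  · simp only [Measure.add_apply, Measure.smul_apply, smul_eq_mul,
      Measure.dirac_apply' _ (Set.toFinite _).measurableSet, Set.indicator_apply,
      Set.mem_setOf_eq, Pi.one_apply]
    norm_num
    rw [← ENNReal.ofReal_add hAB0 (by linarith), ENNReal.toReal_ofReal (by linarith)]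
    ring
  · simp only [Measure.add_apply, Measure.smul_apply, smul_eq_mul,
      Measure.dirac_apply' _ (Set.toFinite _).measurableSet, Set.indicator_apply,
      Set.mem_setOf_eq, Set.mem_inter_iff, Pi.one_apply]
    norm_num
    exact hAB0
end

section
/- Suppose μA, μB, μAB ∈ [0,1] satisfy max(μA, μB) ≤ μAB and μA + μB − μAB ≥ 0. Then there exists a probability measure P on a finite sample space and events E_A, E_B such that P(E_A)=μA, P(E_B)=μB, and P(E_A ∪ E_B)=μAB. -/
open MeasureTheory

theorem stmt_3 (μA μB μAB : ℝ) (hμA : 0 ≤ μA ∧ μA ≤ 1) (hμB : 0 ≤ μB ∧ μB ≤ 1)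
    (hμAB : 0 ≤ μAB ∧ μAB ≤ 1)
    (h1 : max μA μB ≤ μAB) (h2 : 0 ≤ μA + μB - μAB) :
    ∃ (Ω : Type) (_ : MeasurableSpace Ω) (_ : Finite Ω) (P : Measure Ω)
      (_ : IsProbabilityMeasure P) (EA EB : Set Ω),
      (P EA).toReal = μA ∧ (P EB).toReal = μB ∧ (P (EA ∪ EB)).toReal = μAB := by
  have hA1 : μA ≤ μAB := le_trans (le_max_left _ _) h1
  have hB1 : μB ≤ μAB := le_trans (le_max_right _ _) h1
  have hwA : 0 ≤ μAB - μB := by linarith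
  have hwB : 0 ≤ μAB - μA := by linarith
  have hwN : 0 ≤ 1 - μAB := by linarith [hμAB.2]
  set P : Measure (Fin 4) :=
    ENNReal.ofReal (μAB - μB) • Measure.dirac 0 +
    ENNReal.ofReal (μAB - μA) • Measure.dirac 1 +
    ENNReal.ofReal (μA + μB - μAB) • Measure.dirac 2 +
    ENNReal.ofReal (1 - μAB) • Measure.dirac 3 with hP
  have happ : ∀ S : Set (Fin 4), P S =
      ENNReal.ofReal (μAB - μB) * S.indicator 1 0 +
      ENNReal.ofReal (μAB - μA) * S.indicator 1 1 +
      ENNReal.ofReal (μA + μB - μAB) * S.indicator 1 2 +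
      ENNReal.ofReal (1 - μAB) * S.indicator 1 3 := by
    intro S
    simp [hP, Measure.dirac_apply]
  refine ⟨Fin 4, inferInstance, inferInstance, P, ?_, {0, 2}, {1, 2}, ?_, ?_, ?_⟩
  · constructor
    rw [happ Set.univ]
    simp only [Set.indicator_univ, Pi.one_apply, mul_one]
    rw [← ENNReal.ofReal_add hwA hwB, ← ENNReal.ofReal_add (by linarith) h2,
      ← ENNReal.ofReal_add (by linarith) hwN]
    norm_num
    ring
  · rw [happ]
    have h0 : (0 : Fin 4) ∈ ({0, 2} : Set (Fin 4)) := by simp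
    have h2' : (2 : Fin 4) ∈ ({0, 2} : Set (Fin 4)) := by simp
    have h1' : (1 : Fin 4) ∉ ({0, 2} : Set (Fin 4)) := by decide
    have h3' : (3 : Fin 4) ∉ ({0, 2} : Set (Fin 4)) := by decide
    rw [Set.indicator_of_mem h0, Set.indicator_of_mem h2',
      Set.indicator_of_notMem h1', Set.indicator_of_notMem h3']
    simp only [Pi.one_apply, mul_one, mul_zero, add_zero, zero_add]
    rw [← ENNReal.ofReal_add hwA h2, ENNReal.toReal_ofReal (by linarith)]
    ring
  · rw [happ]
    have h0 : (0 : Fin 4) ∉ ({1, 2} : Set (Fin 4)) := by decide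
    have h2' : (2 : Fin 4) ∈ ({1, 2} : Set (Fin 4)) := by simp
    have h1' : (1 : Fin 4) ∈ ({1, 2} : Set (Fin 4)) := by simp
    have h3' : (3 : Fin 4) ∉ ({1, 2} : Set (Fin 4)) := by decide
    rw [Set.indicator_of_notMem h0, Set.indicator_of_mem h2',
      Set.indicator_of_mem h1', Set.indicator_of_notMem h3']
    simp only [Pi.one_apply, mul_one, mul_zero, add_zero, zero_add]
    rw [← ENNReal.ofReal_add hwB h2, ENNReal.toReal_ofReal (by linarith)]
    ring
  · rw [happ]
    have h0 : (0 : Fin 4) ∈ ({0, 2} : Set (Fin 4)) ∪ {1, 2} := by simp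
    have h2' : (2 : Fin 4) ∈ ({0, 2} : Set (Fin 4)) ∪ {1, 2} := by simp
    have h1' : (1 : Fin 4) ∈ ({0, 2} : Set (Fin 4)) ∪ {1, 2} := by simp
    have h3' : (3 : Fin 4) ∉ ({0, 2} : Set (Fin 4)) ∪ {1, 2} := by decide
    rw [Set.indicator_of_mem h0, Set.indicator_of_mem h2',
      Set.indicator_of_mem h1', Set.indicator_of_notMem h3']
    simp only [Pi.one_apply, mul_one, mul_zero, add_zero]
    rw [← ENNReal.ofReal_add hwA hwB, ← ENNReal.ofReal_add (by linarith) h2,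
      ENNReal.toReal_ofReal (by linarith)]
    ring
end

section
/- Not every data triple admits a Fock space representation with μA = 0.013, μA' = 0.947: there is no choice of m², n² ≥ 0 with m²+n²=1 and θ ∈ ℝ such that 0.658 = m²·(0.013)·(0.947) + n²·((0.013+0.947)/2 + √(0.013·0.947)·cos θ). -/
theorem stmt_16 :
    ¬ ∃ m2 n2 θ : ℝ, 0 ≤ m2 ∧ 0 ≤ n2 ∧ m2 + n2 = 1 ∧
      (0.658 : ℝ) = m2 * (0.013 * 0.947) +
        n2 * ((0.013 + 0.947) / 2 + Real.sqrt (0.013 * 0.947) * Real.cos θ) := by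
  rintro ⟨m2, n2, θ, hm, hn, hsum, heq⟩
  have hs0 : (0:ℝ) ≤ Real.sqrt (0.013 * 0.947) := Real.sqrt_nonneg _
  have hs2 : Real.sqrt (0.013 * 0.947) ^ 2 = 0.013 * 0.947 := by
    rw [sq]; exact Real.mul_self_sqrt (by norm_num)
  have hs : Real.sqrt (0.013 * 0.947) ≤ 0.12 := by nlinarith
  have hc : Real.cos θ ≤ 1 := Real.cos_le_one θ
  nlinarith [mul_nonneg hn (sub_nonneg.mpr hc), mul_nonneg hn hs0]
end
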